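/- Let V be a highest weight representation of X(osp_{1|2n}) with highest vector ξ satisfying t_{ii}(u)ξ = λ_i(u)ξ for i = 1,…,2n+1. Then the series λ_i(u) satisfy the consistency conditions λ_i(u)·λ_{i′}(u+n−i+1/2) = λ_{i+1}(u)·λ_{(i+1)′}(u+n−i+1/2) for all i = 1,…,n. -/

import Mathlib

/-!
Common definitions for the Yangian `X(osp_{1|2n})` associated with the orthosymplectic
Lie superalgebra `osp(1|2n)`, following Molev, "Representations of the Yangians
associated with Lie superalgebras osp(1|2n)".

Indices are 0-based: the index set {1,…,2n+1} of the paper corresponds to `Fin (2n+1)`,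
the involution i ↦ i′ = 2n−i+2 corresponds to `pr : i ↦ 2n−i`, the parity ī is 1 unless
i is the middle index `n`, and τ_i = 1 for i ≤ n and −1 for i > n.

The extended Yangian is presented by the coefficients `t_{ij}^{(r)}` (`r ≥ 1`) of the series
`t_{ij}(u) = δ_{ij} + Σ_{r≥1} t_{ij}^{(r)} u^{−r}`, subject to the defining RTT relations,
written in the equivalent explicit component form (formula (2.9) of the paper), with
denominators cleared.  Working with the variables `x = u⁻¹` and `y = v⁻¹`, so that
`u − v = (y−x)/(xy)` and `u − v − κ = (y − x − κxy)/(xy)`, the relation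
`[t_{ij}(u), t_{kl}(v)] = (u−v)⁻¹ (⋯) − (u−v−κ)⁻¹ (⋯)` becomes the power series identity
`relL = relR` below, and the Yangian is the quotient of the free algebra by the
coefficient-wise relations.
-/

noncomputable section

namespace OspYangian

open Finset

/-- The size of the index set: `2n+1`. -/
abbrev NN (n : ℕ) : ℕ := 2 * n + 1

/-- Convenient constructor for indices. -/
def idx {n : ℕ} (i : ℕ) (h : i < 2 * n + 1) : Fin (NN n) := ⟨i, h⟩

/-- The involution `i ↦ i′` (0-based: `i ↦ 2n − i`). -/
def pr {n : ℕ} (i : Fin (NN n)) : Fin (NN n) := idx (2 * n - (i : ℕ)) (by omega)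

/-- The parity `ī`: `0` for the (even) middle index, `1` for the (odd) remaining ones. -/
def pb {n : ℕ} (i : Fin (NN n)) : ℕ := if (i : ℕ) = n then 0 else 1

/-- The sign `τ_i`: `1` for `i ≤ n`, `−1` for `i > n` (0-based). -/
def tau {n : ℕ} (i : Fin (NN n)) : ℂ := if (i : ℕ) ≤ n then 1 else -1

/-- `κ = −n − 1/2`. -/
def kappa (n : ℕ) : ℂ := -(n : ℂ) - 1 / 2

/-- The sign `(−1)^m`. -/
def sg (m : ℕ) : ℂ := (-1 : ℂ) ^ m

section GenericSeries

variable {I : Type*} {A : Type*} [Ring A] [Algebra ℂ A]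

/-- Given a family `t i j : ℕ → A` of coefficients of series `t_{ij}(u) = Σ_r t_{ij}^{(r)} u^{−r}`,
the series `t_{ij}(u)` as an element of `A⟦x⟧⟦y⟧` (constant in `y`), where `x = u⁻¹`. -/
def Tx (t : I → I → ℕ → A) (i j : I) : PowerSeries (PowerSeries A) :=
  PowerSeries.C (PowerSeries.mk (t i j))

/-- The series `t_{ij}(v)` as an element of `A⟦x⟧⟦y⟧` (constant in `x`), where `y = v⁻¹`. -/
def Ty (t : I → I → ℕ → A) (i j : I) : PowerSeries (PowerSeries A) :=
  PowerSeries.mk fun r => PowerSeries.C (t i j r)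

/-- The element `x = u⁻¹` of `A⟦x⟧⟦y⟧`. -/
def Xv (A : Type*) [Ring A] : PowerSeries (PowerSeries A) :=
  PowerSeries.C (PowerSeries.X : PowerSeries A)

/-- The element `y = v⁻¹` of `A⟦x⟧⟦y⟧`. -/
def Yv (A : Type*) [Ring A] : PowerSeries (PowerSeries A) := PowerSeries.X

end GenericSeries

section RTT

variable {A : Type*} [Ring A] [Algebra ℂ A]

/-- Left-hand side of the defining relation of `X(osp_{1|2n})` for a family `t` of series
coefficients: `(u−v)(u−v−κ)·[t_{ij}(u), t_{kl}(v)]` (super-commutator), multiplied by `(xy)²`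
to clear denominators; here `x = u⁻¹`, `y = v⁻¹`. -/
def relL (n : ℕ) (t : Fin (NN n) → Fin (NN n) → ℕ → A) (i j k l : Fin (NN n)) :
    PowerSeries (PowerSeries A) :=
  (Yv A - Xv A) * (Yv A - Xv A - kappa n • (Xv A * Yv A)) *
    (Tx t i j * Ty t k l - sg ((pb i + pb j) * (pb k + pb l)) • (Ty t k l * Tx t i j))

/-- Right-hand side of the defining relation of `X(osp_{1|2n})`:
`(u−v−κ)·A − (u−v)·B` multiplied by `(xy)²`, where
`A = (−1)^{īj̄+īk̄+j̄k̄} (t_{kj}(u)t_{il}(v) − t_{kj}(v)t_{il}(u))` and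
`B = δ_{k i′} Σ_p (−1)^{ī+īj̄+j̄p̄} τ_iτ_p t_{pj}(u)t_{p′l}(v)
   − δ_{l j′} Σ_p (−1)^{j̄+p̄+īk̄+j̄k̄+īp̄} τ_jτ_p t_{kp′}(v)t_{ip}(u)`. -/
def relR (n : ℕ) (t : Fin (NN n) → Fin (NN n) → ℕ → A) (i j k l : Fin (NN n)) :
    PowerSeries (PowerSeries A) :=
  (Xv A * Yv A) * (Yv A - Xv A - kappa n • (Xv A * Yv A)) *
    (sg (pb i * pb j + pb i * pb k + pb j * pb k) •
      (Tx t k j * Ty t i l - Ty t k j * Tx t i l))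
  - (Xv A * Yv A) * (Yv A - Xv A) *
    ((if k = pr i then
        ∑ p : Fin (NN n), (sg (pb i + pb i * pb j + pb j * pb p) * tau i * tau p) •
          (Tx t p j * Ty t (pr p) l)
      else 0)
     - (if l = pr j then
        ∑ p : Fin (NN n), (sg (pb j + pb p + pb i * pb k + pb j * pb k + pb i * pb p)
            * tau j * tau p) • (Ty t k (pr p) * Tx t i p)
      else 0))

/-- A family of matrix elements `t i j : ℕ → A` (the coefficients of series `t_{ij}(u)`)
satisfies the defining `RTT`-relation of `X(osp_{1|2n})`. -/
def SatisfiesRTT (n : ℕ) (t : Fin (NN n) → Fin (NN n) → ℕ → A) : Prop :=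
  ∀ i j k l : Fin (NN n), relL n t i j k l = relR n t i j k l

end RTT

/-- The free algebra on the generators `t_{ij}^{(r)}`, `r ≥ 1` (the last component `r : ℕ`
encodes the generator `t_{ij}^{(r+1)}`). -/
abbrev FA (n : ℕ) := FreeAlgebra ℂ (Fin (NN n) × Fin (NN n) × ℕ)

/-- The coefficients of the generating series `t_{ij}(u)` in the free algebra:
`t_{ij}^{(0)} = δ_{ij}` and `t_{ij}^{(r)}` is a free generator for `r ≥ 1`. -/
def fgen (n : ℕ) : Fin (NN n) → Fin (NN n) → ℕ → FA n := fun i j r =>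
  if r = 0 then (if i = j then 1 else 0) else FreeAlgebra.ι ℂ (i, j, r - 1)

/-- The defining relations of the extended Yangian: all coefficients of `relL` are identified
with the corresponding coefficients of `relR`. -/
def yrel (n : ℕ) : FA n → FA n → Prop := fun a b =>
  ∃ (i j k l : Fin (NN n)) (r s : ℕ),
    a = PowerSeries.coeff s
          (PowerSeries.coeff r (relL n (fgen n) i j k l)) ∧
    b = PowerSeries.coeff s
          (PowerSeries.coeff r (relR n (fgen n) i j k l))

/-- The extended Yangian `X(osp_{1|2n})`. -/
abbrev XX (n : ℕ) := RingQuot (yrel n)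

/-- The coefficient `t_{ij}^{(r)}` of the series `t_{ij}(u) = Σ_{r≥0} t_{ij}^{(r)} u^{−r}`
in the extended Yangian (`TT n i j 0 = δ_{ij}`). -/
def TT (n : ℕ) (i j : Fin (NN n)) (r : ℕ) : XX n :=
  RingQuot.mkAlgHom ℂ (yrel n) (fgen n i j r)

section Shift

variable {M : Type*} [AddCommMonoid M] [Module ℂ M]

/-- The coefficient of `u^{−s}` in `f(u+a)`, where `f(u) = Σ_r c r · u^{−r}`:
`Σ_{r≤s} (−1)^{s−r} C(s−1, s−r) a^{s−r} · c r`. -/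
def shiftCoeff (a : ℂ) (c : ℕ → M) (s : ℕ) : M :=
  ∑ r ∈ Finset.range (s + 1),
    ((-1 : ℂ) ^ (s - r) * (Nat.choose (s - 1) (s - r) : ℂ) * a ^ (s - r)) • c r

/-- For a power series `f` in `u⁻¹`, the power series of `f(u+a)` in `u⁻¹`. -/
def shiftSeries (a : ℂ) (f : PowerSeries ℂ) : PowerSeries ℂ :=
  PowerSeries.mk fun s => shiftCoeff a (fun r => PowerSeries.coeff r f) s

end Shift

/-- The consistency conditions (3.4) of the paper:
`λ_i(u) λ_{i′}(u+n−i+1/2) = λ_{i+1}(u) λ_{(i+1)′}(u+n−i+1/2)` for `i = 1,…,n`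
(0-based: positions `i` and `i+1` with `i < n`, shift `n − i − 1/2`). -/
def Consistent (n : ℕ) (lam : Fin (NN n) → PowerSeries ℂ) : Prop :=
  ∀ (i : ℕ) (h : i < n),
    lam (idx i (by omega)) *
        shiftSeries ((n : ℂ) - (i : ℂ) - 1 / 2) (lam (pr (idx i (by omega)))) =
      lam (idx (i + 1) (by omega)) *
        shiftSeries ((n : ℂ) - (i : ℂ) - 1 / 2) (lam (pr (idx (i + 1) (by omega))))

/-- `V` is a highest weight module over `X(osp_{1|2n})` with highest vector `xi` and
highest weight `lam` (a tuple of series in `1 + u⁻¹ℂ[[u⁻¹]]`): `xi` is nonzero, generates `V`,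
is annihilated by all `t_{ij}(u)` with `i < j` and is an eigenvector of all `t_{ii}(u)`
with eigenvalue the series `λ_i(u)`. -/
def IsHighestWeight (n : ℕ) {V : Type*} [AddCommGroup V] [Module ℂ V] [Module (XX n) V]
    (xi : V) (lam : Fin (NN n) → PowerSeries ℂ) : Prop :=
  xi ≠ 0 ∧ Submodule.span (XX n) {xi} = ⊤ ∧
  (∀ i j : Fin (NN n), i < j → ∀ r : ℕ, TT n i j r • xi = 0) ∧
  (∀ (i : Fin (NN n)) (r : ℕ), TT n i i r • xi = (PowerSeries.coeff r (lam i)) • xi) ∧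
  (∀ i : Fin (NN n), PowerSeries.constantCoeff (lam i) = 1)

/-- The generators of the left ideal defining the Verma module `M(λ(u))`: all coefficients
`t_{ij}^{(r)}`, `r ≥ 1`, with `i < j`, and all `t_{ii}^{(r)} − λ_i^{(r)}`, `r ≥ 1`. -/
def vermaGens (n : ℕ) (lam : Fin (NN n) → PowerSeries ℂ) : Set (XX n) :=
  {x | (∃ (i j : Fin (NN n)) (r : ℕ), i < j ∧ x = TT n i j (r + 1)) ∨
       (∃ (i : Fin (NN n)) (r : ℕ),
         x = TT n i i (r + 1) - algebraMap ℂ (XX n) (PowerSeries.coeff (r + 1) (lam i)))}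

/-- The left ideal defining the Verma module `M(λ(u))`. -/
def vermaIdeal (n : ℕ) (lam : Fin (NN n) → PowerSeries ℂ) : Submodule (XX n) (XX n) :=
  Submodule.span (XX n) (vermaGens n lam)

/-- The Verma module `M(λ(u))`. -/
abbrev Verma (n : ℕ) (lam : Fin (NN n) → PowerSeries ℂ) :=
  XX n ⧸ vermaIdeal n lam

/-- The sum of all proper submodules of the Verma module `M(λ(u))` (its unique maximal
proper submodule). -/
def vermaRad (n : ℕ) (lam : Fin (NN n) → PowerSeries ℂ) : Submodule (XX n) (Verma n lam) :=
  sSup {W : Submodule (XX n) (Verma n lam) | W ≠ ⊤}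

/-- The irreducible quotient `L(λ(u))` of the Verma module `M(λ(u))`. -/
abbrev Lmod (n : ℕ) (lam : Fin (NN n) → PowerSeries ℂ) :=
  Verma n lam ⧸ vermaRad n lam

/-- The Drinfeld polynomial condition `λ₊(u)/λ₋(u) = P(u+1)/P(u)` for a pair of series
`λ₋(u), λ₊(u) ∈ 1 + u⁻¹ℂ[[u⁻¹]]` and a polynomial `P`, i.e. the equality of series
`λ₊(u)·u^{−deg P}·P(u) = λ₋(u)·u^{−deg P}·P(u+1)`; here `u^{−deg P}·P(u)` is the reversed
polynomial `P.reverse` regarded as a power series in `u⁻¹`. -/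
def DrinfeldPair (lamLow lamHigh : PowerSeries ℂ) (P : Polynomial ℂ) : Prop :=
  lamHigh * ((P.reverse : Polynomial ℂ) : PowerSeries ℂ) =
    lamLow * (((P.comp (Polynomial.X + 1)).reverse : Polynomial ℂ) : PowerSeries ℂ)

end OspYangian
namespace OspYangian

open Finset

section ModuleLemmas

variable {n : ℕ} {V : Type*} [AddCommGroup V] [Module ℂ V] [Module (XX n) V]
  [IsScalarTower ℂ (XX n) V]

theorem smul_comm_alg (c : ℂ) (x : XX n) (v : V) : x • (c • v) = c • (x • v) := by
  rw [← algebraMap_smul (XX n) c v, ← mul_smul, ← Algebra.commutes, mul_smul,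
    algebraMap_smul]

end ModuleLemmas

section Vplus

variable (n : ℕ) (V : Type*) [AddCommGroup V] [Module ℂ V] [Module (XX n) V]
  [IsScalarTower ℂ (XX n) V]

/-- The subspace `V⁺ = {η ∈ V | t_{1j}(u)η = 0 (j > 1), t_{i1′}(u)η = 0 (i < 1′)}`
(0-based: first index `0`, last index `2n`). -/
def Vplus : Set V :=
  {η | (∀ j : Fin (NN n), 0 < (j : ℕ) → ∀ r : ℕ, TT n (idx 0 (by omega)) j r • η = 0) ∧
       (∀ i : Fin (NN n), (i : ℕ) < 2 * n → ∀ r : ℕ, TT n i (idx (2 * n) (by omega)) r • η = 0)}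

/-- `V⁺` as a `ℂ`-subspace of `V`. -/
def VplusSub : Submodule ℂ V where
  carrier := Vplus n V
  zero_mem' := ⟨fun _ _ _ => smul_zero _, fun _ _ _ => smul_zero _⟩
  add_mem' := by
    rintro a b ⟨h1, h2⟩ ⟨g1, g2⟩
    exact ⟨fun j hj r => by rw [smul_add, h1 j hj r, g1 j hj r, add_zero],
           fun i hi r => by rw [smul_add, h2 i hi r, g2 i hi r, add_zero]⟩
  smul_mem' := by
    rintro c x ⟨h1, h2⟩
    exact ⟨fun j hj r => by rw [smul_comm_alg, h1 j hj r, smul_zero],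
           fun i hi r => by rw [smul_comm_alg, h2 i hi r, smul_zero]⟩

/-- The subspace `V⁰ = {η ∈ V | t_{ij}(u)η = 0 for all i < j}`. -/
def Vzero : Set V :=
  {η | ∀ i j : Fin (NN n), i < j → ∀ r : ℕ, TT n i j r • η = 0}

end Vplus

/-- The embedding of index sets `{1,…,2n+1} ↪ {1,…,2(n+1)+1}`, `i ↦ i+1`, used in the
reduction from `X(osp_{1|2(n+1)})` to `X(osp_{1|2n})`. -/
def emb {m : ℕ} (i : Fin (NN m)) : Fin (NN (m + 1)) :=
  idx ((i : ℕ) + 1) (by have h : (i : ℕ) < 2 * m + 1 := i.isLt; omega)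

section Yangian

/-- `φ` is the automorphism `t_{ij}(u) ↦ f(u) t_{ij}(u)` of `X(osp_{1|2n})`
for the series `f(u) = Σ_s f_s u^{−s}` with `f_0 = 1`. -/
def IsMultAut (n : ℕ) (f : ℕ → ℂ) (φ : XX n →ₐ[ℂ] XX n) : Prop :=
  f 0 = 1 ∧ ∀ (i j : Fin (NN n)) (r : ℕ),
    φ (TT n i j r) = ∑ s ∈ Finset.range (r + 1), f s • TT n i j (r - s)

/-- The Yangian `Y(osp_{1|2n})`: the subalgebra of `X(osp_{1|2n})` of elements stable under
all the automorphisms `t_{ij}(u) ↦ f(u) t_{ij}(u)`. -/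
def Ysub (n : ℕ) : Subalgebra ℂ (XX n) where
  carrier := {z | ∀ (f : ℕ → ℂ) (φ : XX n →ₐ[ℂ] XX n), IsMultAut n f φ → φ z = z}
  mul_mem' := by
    intro a b ha hb f φ hφ
    rw [map_mul, ha f φ hφ, hb f φ hφ]
  one_mem' := by
    intro f φ hφ
    exact map_one φ
  add_mem' := by
    intro a b ha hb f φ hφ
    rw [map_add, ha f φ hφ, hb f φ hφ]
  zero_mem' := by
    intro f φ hφ
    exact map_zero φ
  algebraMap_mem' := by
    intro c f φ hφ
    exact φ.commutes c

/-- A finite-dimensional irreducible representation of the Yangian `Y(osp_{1|2n})`. -/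
structure FDRep (n : ℕ) where
  carrier : Type
  [ab : AddCommGroup carrier]
  [mc : Module ℂ carrier]
  [my : Module (Ysub n) carrier]
  [tw : IsScalarTower ℂ (Ysub n) carrier]
  fd : FiniteDimensional ℂ carrier
  simple : IsSimpleModule (Ysub n) carrier

attribute [instance] FDRep.ab FDRep.mc FDRep.my FDRep.tw

/-- Isomorphism of representations of `Y(osp_{1|2n})`. -/
def fdrepSetoid (n : ℕ) : Setoid (FDRep n) where
  r V W := Nonempty (V.carrier ≃ₗ[Ysub n] W.carrier)
  iseqv := ⟨fun _ => ⟨LinearEquiv.refl _ _⟩,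
    fun ⟨e⟩ => ⟨e.symm⟩, fun ⟨e⟩ ⟨f⟩ => ⟨e.trans f⟩⟩

end Yangian

end OspYangian
namespace OspYangian

open Finset

section VectorRep

variable (n : ℕ)

/-- The coefficient at `u^{−r}` of the image of `t_{ij}(u)` under the vector representation
`t_{ij}(u) ↦ δ_{ij} + u⁻¹ e_{ij} (−1)^{ī} − (u+κ)⁻¹ e_{j′i′} (−1)^{īj̄} τ_i τ_j`
of `X(osp_{1|2n})` on `ℂ^{1|2n}`, as a matrix. -/
def vecMat (i j : Fin (NN n)) (r : ℕ) : Matrix (Fin (NN n)) (Fin (NN n)) ℂ :=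
  if r = 0 then (if i = j then 1 else 0)
  else (if r = 1 then (sg (pb i)) • Matrix.single i j (1 : ℂ) else 0)
    - ((-(kappa n)) ^ (r - 1) * sg (pb i * pb j) * tau i * tau j) •
        Matrix.single (pr j) (pr i) (1 : ℂ)

/-- The entry at `(a,b)` of the matrix of `t_{ij}(u)` in the vector representation,
as a function of a complex number `u`. -/
def vrepE (u : ℂ) (i j a b : Fin (NN n)) : ℂ :=
  (if i = j ∧ a = b then 1 else 0)
  + u⁻¹ * sg (pb i) * (if a = i ∧ b = j then 1 else 0)
  - (u + kappa n)⁻¹ * sg (pb i * pb j) * tau i * tau j *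
      (if a = pr j ∧ b = pr i then 1 else 0)

/-- The entry at `(a,b)` of the coefficient at `u^{−s}` of the matrix of `t_{ij}(u−m)` in the
vector representation, using `(u−m)⁻¹ = Σ_{s≥1} m^{s−1} u^{−s}` and
`(u−m+κ)⁻¹ = Σ_{s≥1} (m−κ)^{s−1} u^{−s}`. -/
def vrepCE (m : ℂ) (s : ℕ) (i j a b : Fin (NN n)) : ℂ :=
  if s = 0 then (if i = j ∧ a = b then 1 else 0)
  else m ^ (s - 1) * sg (pb i) * (if a = i ∧ b = j then 1 else 0)
    - (m - kappa n) ^ (s - 1) * sg (pb i * pb j) * tau i * tau j *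
        (if a = pr j ∧ b = pr i then 1 else 0)

variable (k : ℕ)

/-- The `k`-fold tensor power `(ℂ^{1|2n})^{⊗k}`, realized as functions on multi-indices. -/
abbrev Wk := (Fin k → Fin (NN n)) → ℂ

/-- The Koszul sign arising when the elementary tensor operator
`t_{a_0 a_1} ⊗ t_{a_1 a_2} ⊗ ⋯ ⊗ t_{a_{k−1} a_k}` (each factor of parity
`p(a_{p−1}) + p(a_p)`) is applied to the basis vector `e_{d_1} ⊗ ⋯ ⊗ e_{d_k}`:
`(−1)^{Σ_p (p(a_{p−1})+p(a_p))·(p(d_1)+⋯+p(d_{p−1}))}`. -/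
def kosz (a : Fin (k + 1) → Fin (NN n)) (d : Fin k → Fin (NN n)) : ℂ :=
  sg (∑ p : Fin k, (pb (a p.castSucc) + pb (a p.succ)) *
    (∑ q : Fin k, if (q : ℕ) < (p : ℕ) then pb (d q) else 0))

/-- The matrix of the operator
`T_{ij}(u) = Σ_{a_1,…,a_{k−1}} t_{i a_1}(u) ⊗ t_{a_1 a_2}(u−1) ⊗ ⋯ ⊗ t_{a_{k−1} j}(u−k+1)`
on `(ℂ^{1|2n})^{⊗k}`, each tensor factor acting through the vector representation and the
tensor products taken with the super sign convention. -/
def TopMat (u : ℂ) (i j : Fin (NN n)) :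
    Matrix (Fin k → Fin (NN n)) (Fin k → Fin (NN n)) ℂ := fun c d =>
  ∑ a : Fin (k + 1) → Fin (NN n),
    if a 0 = i ∧ a (Fin.last k) = j then
      kosz n k a d *
        ∏ p : Fin k, vrepE n (u - ((p : ℕ) : ℂ)) (a p.castSucc) (a p.succ) (c p) (d p)
    else 0

/-- The matrix of the coefficient at `u^{−r}` of the operator `T_{ij}(u)` on
`(ℂ^{1|2n})^{⊗k}` (sum over compositions `r = r_1 + ⋯ + r_k` of products of coefficients of
the shifted vector representations). -/
def TopCMat (r : ℕ) (i j : Fin (NN n)) :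
    Matrix (Fin k → Fin (NN n)) (Fin k → Fin (NN n)) ℂ := fun c d =>
  ∑ a : Fin (k + 1) → Fin (NN n),
    if a 0 = i ∧ a (Fin.last k) = j then
      kosz n k a d *
        ∑ rr ∈ Finset.Nat.antidiagonalTuple k r,
          ∏ p : Fin k, vrepCE n ((p : ℕ) : ℂ) (rr p) (a p.castSucc) (a p.succ) (c p) (d p)
    else 0

/-- The antisymmetric vector `ξ_k = Σ_{σ ∈ S_k} sgn(σ) e_{σ(1)} ⊗ ⋯ ⊗ e_{σ(k)}`. -/
def xiVec (hk : k ≤ NN n) : Wk n k := fun c =>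
  ∑ σ : Equiv.Perm (Fin k),
    ((Equiv.Perm.sign σ : ℤ) : ℂ) * (if c = fun p => Fin.castLE hk (σ p) then 1 else 0)

end VectorRep

section SuperTranspose

variable (n : ℕ)

/-- The super-transposition `t : End ℂ^{1|2n} → End ℂ^{1|2n}`, the linear extension of
`e_{ij} ↦ e_{j′i′} (−1)^{īj̄+ī} τ_i τ_j`. -/
def stpM (A : Matrix (Fin (NN n)) (Fin (NN n)) ℂ) : Matrix (Fin (NN n)) (Fin (NN n)) ℂ :=
  ∑ i : Fin (NN n), ∑ j : Fin (NN n),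
    (A i j * sg (pb i * pb j + pb i) * tau i * tau j) •
      Matrix.single (pr j) (pr i) (1 : ℂ)

/-- `End(ℂ^{1|2n}) ⊗ End(ℂ^{1|2n})` realized as operators on `ℂ^{1|2n} ⊗ ℂ^{1|2n}`. -/
abbrev MatP := Matrix (Fin (NN n) × Fin (NN n)) (Fin (NN n) × Fin (NN n)) ℂ

/-- The elementary tensor `e_{ij} ⊗ e_{kl}` as an operator on `ℂ^{1|2n} ⊗ ℂ^{1|2n}`,
with the Koszul sign convention `(a ⊗ b)(v ⊗ w) = (−1)^{|b||v|} av ⊗ bw`. -/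
def elemT2 (i j k l : Fin (NN n)) : MatP n := fun x y =>
  if x = (i, k) ∧ y = (j, l) then sg ((pb k + pb l) * pb j) else 0

/-- The operator `P = Σ_{i,j} e_{ij} ⊗ e_{ji} (−1)^{j̄}`. -/
def Pmat : MatP n := ∑ i : Fin (NN n), ∑ j : Fin (NN n), sg (pb j) • elemT2 n i j j i

/-- The operator `Q = Σ_{i,j} e_{ij} ⊗ e_{i′j′} (−1)^{īj̄} τ_i τ_j`. -/
def Qmat : MatP n := ∑ i : Fin (NN n), ∑ j : Fin (NN n),
  (sg (pb i * pb j) * tau i * tau j) • elemT2 n i j (pr i) (pr j)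

/-- The super-transposition applied to the first tensor factor of
`End(ℂ^{1|2n}) ⊗ End(ℂ^{1|2n})`: extract the coefficients of `M` on elementary tensors
`e_{ij} ⊗ e_{kl}` and apply `t(e_{ij}) = e_{j′i′}(−1)^{īj̄+ī}τ_iτ_j`. -/
def stp1 (M : MatP n) : MatP n :=
  ∑ i : Fin (NN n), ∑ j : Fin (NN n), ∑ k : Fin (NN n), ∑ l : Fin (NN n),
    (M (i, k) (j, l) * sg ((pb k + pb l) * pb j) * sg (pb i * pb j + pb i) * tau i * tau j) •
      elemT2 n (pr j) (pr i) k l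

/-- The super-transposition applied to the second tensor factor. -/
def stp2 (M : MatP n) : MatP n :=
  ∑ i : Fin (NN n), ∑ j : Fin (NN n), ∑ k : Fin (NN n), ∑ l : Fin (NN n),
    (M (i, k) (j, l) * sg ((pb k + pb l) * pb j) * sg (pb k * pb l + pb k) * tau k * tau l) •
      elemT2 n i j (pr l) (pr k)

/-- `End(ℂ^{1|2n})^{⊗3}` realized as operators on `(ℂ^{1|2n})^{⊗3}`. -/
abbrev Mat3 := Matrix (Fin (NN n) × Fin (NN n) × Fin (NN n))
  (Fin (NN n) × Fin (NN n) × Fin (NN n)) ℂ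

/-- The elementary tensor `e_{ij} ⊗ e_{kl} ⊗ e_{mp}` as an operator on `(ℂ^{1|2n})^{⊗3}`
with the Koszul sign convention. -/
def elemT3 (i j k l m p : Fin (NN n)) : Mat3 n := fun x y =>
  if x = (i, k, m) ∧ y = (j, l, p) then
    sg ((pb k + pb l) * pb j + (pb m + pb p) * (pb j + pb l))
  else 0

/-- `P` placed in the tensor factors 1 and 2 of `End(ℂ^{1|2n})^{⊗3}`. -/
def P12 : Mat3 n := ∑ i : Fin (NN n), ∑ j : Fin (NN n), ∑ m : Fin (NN n),
  sg (pb j) • elemT3 n i j j i m m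

/-- `P` placed in the tensor factors 1 and 3. -/
def P13 : Mat3 n := ∑ i : Fin (NN n), ∑ j : Fin (NN n), ∑ m : Fin (NN n),
  sg (pb j) • elemT3 n i j m m j i

/-- `P` placed in the tensor factors 2 and 3. -/
def P23 : Mat3 n := ∑ i : Fin (NN n), ∑ j : Fin (NN n), ∑ m : Fin (NN n),
  sg (pb j) • elemT3 n m m i j j i

/-- `Q` placed in the tensor factors 1 and 2. -/
def Q12 : Mat3 n := ∑ i : Fin (NN n), ∑ j : Fin (NN n), ∑ m : Fin (NN n),
  (sg (pb i * pb j) * tau i * tau j) • elemT3 n i j (pr i) (pr j) m m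

/-- `Q` placed in the tensor factors 1 and 3. -/
def Q13 : Mat3 n := ∑ i : Fin (NN n), ∑ j : Fin (NN n), ∑ m : Fin (NN n),
  (sg (pb i * pb j) * tau i * tau j) • elemT3 n i j m m (pr i) (pr j)

/-- `Q` placed in the tensor factors 2 and 3. -/
def Q23 : Mat3 n := ∑ i : Fin (NN n), ∑ j : Fin (NN n), ∑ m : Fin (NN n),
  (sg (pb i * pb j) * tau i * tau j) • elemT3 n m m i j (pr i) (pr j)

/-- The `R`-matrix `R(w) = 1 − P/w + Q/(w−κ)` with `P`, `Q` placed in a given pair of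
tensor factors. -/
def Rmat3 (Pm Qm : Mat3 n) (w : ℂ) : Mat3 n :=
  1 - w⁻¹ • Pm + (w - kappa n)⁻¹ • Qm

end SuperTranspose

section glYangian

/-- The free algebra on the generators `t°_{ij}^{(r)}`, `r ≥ 1`, of the Yangian `Y(gl_N)`. -/
abbrev FGl (N : ℕ) := FreeAlgebra ℂ (Fin N × Fin N × ℕ)

/-- The coefficients of the generating series `t°_{ij}(u)` of `Y(gl_N)` in the free algebra. -/
def glgen (N : ℕ) : Fin N → Fin N → ℕ → FGl N := fun i j r =>
  if r = 0 then (if i = j then 1 else 0) else FreeAlgebra.ι ℂ (i, j, r - 1)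

/-- Left-hand side of the defining relation of `Y(gl_N)`:
`(u−v)[t°_{ij}(u), t°_{kl}(v)]` multiplied by `xy` (`x = u⁻¹`, `y = v⁻¹`). -/
def relLgl (N : ℕ) (t : Fin N → Fin N → ℕ → FGl N) (i j k l : Fin N) :
    PowerSeries (PowerSeries (FGl N)) :=
  (Yv (FGl N) - Xv (FGl N)) * (Tx t i j * Ty t k l - Ty t k l * Tx t i j)

/-- Right-hand side of the defining relation of `Y(gl_N)`:
`t°_{kj}(u)t°_{il}(v) − t°_{kj}(v)t°_{il}(u)` multiplied by `xy`. -/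
def relRgl (N : ℕ) (t : Fin N → Fin N → ℕ → FGl N) (i j k l : Fin N) :
    PowerSeries (PowerSeries (FGl N)) :=
  (Xv (FGl N) * Yv (FGl N)) * (Tx t k j * Ty t i l - Ty t k j * Tx t i l)

/-- The defining relations of `Y(gl_N)`. -/
def glrel (N : ℕ) : FGl N → FGl N → Prop := fun a b =>
  ∃ (i j k l : Fin N) (r s : ℕ),
    a = PowerSeries.coeff s
          (PowerSeries.coeff r (relLgl N (glgen N) i j k l)) ∧
    b = PowerSeries.coeff s
          (PowerSeries.coeff r (relRgl N (glgen N) i j k l))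

/-- The Yangian `Y(gl_N)`. -/
abbrev Ygl (N : ℕ) := RingQuot (glrel N)

/-- The generator `t°_{ij}^{(r)}` of `Y(gl_N)` (`TG N i j 0 = δ_{ij}`). -/
def TG (N : ℕ) (i j : Fin N) (r : ℕ) : Ygl N :=
  RingQuot.mkAlgHom ℂ (glrel N) (glgen N i j r)

/-- The embedding of index sets `{1,…,n} ↪ {1,…,2n+1}` used for `Y(gl_n) ↪ X(osp_{1|2n})`. -/
def embgl {n : ℕ} (i : Fin n) : Fin (NN n) :=
  idx (i : ℕ) (by have h : (i : ℕ) < n := i.isLt; omega)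

end glYangian

/-- `k ≤ n` implies `k ≤ 2n+1`. -/
theorem le_NN {k n : ℕ} (h : k ≤ n) : k ≤ NN n := by
  have h2 : k ≤ 2 * n + 1 := by omega
  exact h2



end OspYangian

namespace OspYangian
/-! ### Auxiliary development for `hw_consistency`. -/

set_option synthInstance.maxHeartbeats 1000000
set_option maxHeartbeats 1000000

section Transfer

variable {A : Type*} [Ring A] [Algebra ℂ A] {B : Type*} [Ring B] [Algebra ℂ B]

/-- Two-level map of power series along an algebra homomorphism. -/
def mapT (φ : A →ₐ[ℂ] B) :
    PowerSeries (PowerSeries A) →+* PowerSeries (PowerSeries B) :=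
  PowerSeries.map (PowerSeries.map (φ : A →+* B))

lemma mapT_coeff (φ : A →ₐ[ℂ] B) (F : PowerSeries (PowerSeries A)) (r s : ℕ) :
    PowerSeries.coeff s (PowerSeries.coeff r (mapT φ F)) =
      φ (PowerSeries.coeff s (PowerSeries.coeff r F)) := by
  simp [mapT, PowerSeries.coeff_map]

lemma mapT_Tx {I : Type*} (φ : A →ₐ[ℂ] B) (t : I → I → ℕ → A) (i j : I) :
    mapT φ (Tx t i j) = Tx (fun a b r => φ (t a b r)) i j := by
  unfold Tx mapT
  rw [PowerSeries.map_C]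
  congr 1


lemma mapT_Ty {I : Type*} (φ : A →ₐ[ℂ] B) (t : I → I → ℕ → A) (i j : I) :
    mapT φ (Ty t i j) = Ty (fun a b r => φ (t a b r)) i j := by
  unfold Ty mapT
  apply PowerSeries.ext
  intro k
  simp [PowerSeries.coeff_map, PowerSeries.coeff_mk]

lemma mapT_Xv (φ : A →ₐ[ℂ] B) : mapT φ (Xv A) = Xv B := by
  unfold Xv mapT
  rw [PowerSeries.map_C, PowerSeries.map_X]

lemma mapT_Yv (φ : A →ₐ[ℂ] B) : mapT φ (Yv A) = Yv B := by
  unfold Yv mapT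
  rw [PowerSeries.map_X]

lemma mapT_smul (φ : A →ₐ[ℂ] B) (c : ℂ) (F : PowerSeries (PowerSeries A)) :
    mapT φ (c • F) = c • mapT φ F := by
  apply PowerSeries.ext; intro r
  apply PowerSeries.ext; intro s
  rw [PowerSeries.coeff_smul, PowerSeries.coeff_smul, mapT_coeff, mapT_coeff,
    PowerSeries.coeff_smul, PowerSeries.coeff_smul, map_smul]

lemma mapT_relL (φ : A →ₐ[ℂ] B) (n : ℕ) (t : Fin (NN n) → Fin (NN n) → ℕ → A)
    (i j k l : Fin (NN n)) :
    mapT φ (relL n t i j k l) = relL n (fun a b r => φ (t a b r)) i j k l := by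
  unfold relL
  simp only [map_mul, map_sub, mapT_smul, mapT_Xv, mapT_Yv, mapT_Tx, mapT_Ty]

lemma mapT_relR (φ : A →ₐ[ℂ] B) (n : ℕ) (t : Fin (NN n) → Fin (NN n) → ℕ → A)
    (i j k l : Fin (NN n)) :
    mapT φ (relR n t i j k l) = relR n (fun a b r => φ (t a b r)) i j k l := by
  unfold relR
  simp only [map_mul, map_sub, map_sum, apply_ite (mapT φ), map_zero,
    mapT_smul, mapT_Xv, mapT_Yv, mapT_Tx, mapT_Ty]

/-- The generating coefficients inside the extended Yangian. -/
def tq (n : ℕ) : Fin (NN n) → Fin (NN n) → ℕ → XX n := fun i j r => TT n i j r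

lemma rel_tq (n : ℕ) (i j k l : Fin (NN n)) :
    relL n (tq n) i j k l = relR n (tq n) i j k l := by
  have h1 : relL n (tq n) i j k l
      = mapT (RingQuot.mkAlgHom ℂ (yrel n)) (relL n (fgen n) i j k l) :=
    (mapT_relL _ n (fgen n) i j k l).symm
  have h2 : relR n (tq n) i j k l
      = mapT (RingQuot.mkAlgHom ℂ (yrel n)) (relR n (fgen n) i j k l) :=
    (mapT_relR _ n (fgen n) i j k l).symm
  rw [h1, h2]
  apply PowerSeries.ext; intro r
  apply PowerSeries.ext; intro s
  rw [mapT_coeff, mapT_coeff]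
  exact RingQuot.mkAlgHom_rel ℂ ⟨i, j, k, l, r, s, rfl, rfl⟩

end Transfer

section PhiSec

lemma sum_antidiag_swap {M : Type*} [AddCommMonoid M] (n : ℕ) (f : ℕ → ℕ → M) :
    ∑ p ∈ Finset.HasAntidiagonal.antidiagonal n, f p.1 p.2 = ∑ p ∈ Finset.HasAntidiagonal.antidiagonal n, f p.2 p.1 := by
  conv_rhs => rw [← Finset.HasAntidiagonal.map_swap_antidiagonal, Finset.sum_map]
  simp only [Function.Embedding.coeFn_mk, Prod.fst_swap, Prod.snd_swap]

variable {n : ℕ} {V : Type} [AddCommGroup V] [Module ℂ V] [Module (XX n) V]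
  [IsScalarTower ℂ (XX n) V]

/-- Coefficient-wise application to the highest vector followed by a linear functional. -/
def Phi (θ : Module.Dual ℂ V) (ξ : V) (F : PowerSeries (PowerSeries (XX n))) :
    PowerSeries (PowerSeries ℂ) :=
  PowerSeries.mk fun r => PowerSeries.mk fun s =>
    θ ((PowerSeries.coeff s (PowerSeries.coeff r F)) • ξ)

variable (θ : Module.Dual ℂ V) (ξ : V)

lemma coeff_Phi (F : PowerSeries (PowerSeries (XX n))) (r s : ℕ) :
    PowerSeries.coeff s (PowerSeries.coeff r (Phi θ ξ F)) =
      θ ((PowerSeries.coeff s (PowerSeries.coeff r F)) • ξ) := by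
  simp [Phi, PowerSeries.coeff_mk]

lemma Phi_add (F G : PowerSeries (PowerSeries (XX n))) :
    Phi θ ξ (F + G) = Phi θ ξ F + Phi θ ξ G := by
  apply PowerSeries.ext; intro r; apply PowerSeries.ext; intro s
  simp [coeff_Phi, add_smul]

lemma Phi_sub (F G : PowerSeries (PowerSeries (XX n))) :
    Phi θ ξ (F - G) = Phi θ ξ F - Phi θ ξ G := by
  apply PowerSeries.ext; intro r; apply PowerSeries.ext; intro s
  simp [coeff_Phi, sub_smul]

lemma Phi_smul (c : ℂ) (F : PowerSeries (PowerSeries (XX n))) :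
    Phi θ ξ (c • F) = c • Phi θ ξ F := by
  apply PowerSeries.ext; intro r; apply PowerSeries.ext; intro s
  rw [PowerSeries.coeff_smul, PowerSeries.coeff_smul, coeff_Phi θ ξ (c • F), coeff_Phi θ ξ F,
    PowerSeries.coeff_smul, PowerSeries.coeff_smul, smul_assoc]
  rw [map_smul]

lemma Phi_sum {I : Type*} (s : Finset I) (f : I → PowerSeries (PowerSeries (XX n))) :
    Phi θ ξ (∑ p ∈ s, f p) = ∑ p ∈ s, Phi θ ξ (f p) := by
  apply PowerSeries.ext; intro r; apply PowerSeries.ext; intro k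
  simp [coeff_Phi, Finset.sum_smul]

lemma Phi_one (hθ : θ ξ = 1) : Phi θ ξ (1 : PowerSeries (PowerSeries (XX n))) = 1 := by
  apply PowerSeries.ext; intro r; apply PowerSeries.ext; intro s
  rw [coeff_Phi]
  by_cases hr : r = 0 <;> by_cases hs : s = 0 <;>
    simp [hr, hs, PowerSeries.coeff_one, hθ]

end PhiSec

section PhiMul

set_option linter.unusedSectionVars false

variable {n : ℕ} {V : Type} [AddCommGroup V] [Module ℂ V] [Module (XX n) V]
  [IsScalarTower ℂ (XX n) V]
variable (θ : Module.Dual ℂ V) (ξ : V)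

/-- `λ_i(u)` as an `x`-series (constant in `y`). -/
def Lamx (lam : Fin (NN n) → PowerSeries ℂ) (i : Fin (NN n)) : PowerSeries (PowerSeries ℂ) :=
  PowerSeries.C (lam i)

/-- `λ_i(v)` as a `y`-series (constant in `x`). -/
def Lamy (lam : Fin (NN n) → PowerSeries ℂ) (i : Fin (NN n)) : PowerSeries (PowerSeries ℂ) :=
  PowerSeries.mk fun r => PowerSeries.C (PowerSeries.coeff r (lam i))

/-- Scalar series inside the Yangian-valued series. -/
def AMap (n : ℕ) : PowerSeries (PowerSeries ℂ) →+* PowerSeries (PowerSeries (XX n)) :=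
  mapT (Algebra.ofId ℂ (XX n))

lemma Phi_mul_Ty_lt (hw3 : ∀ (i j : Fin (NN n)), i < j → ∀ r : ℕ, TT n i j r • ξ = 0)
    {i j : Fin (NN n)} (hij : i < j) (F : PowerSeries (PowerSeries (XX n))) :
    Phi θ ξ (F * Ty (tq n) i j) = 0 := by
  apply PowerSeries.ext; intro r; apply PowerSeries.ext; intro s
  rw [coeff_Phi, PowerSeries.coeff_mul, map_sum, Finset.sum_smul, map_sum]
  rw [map_zero, map_zero]
  apply Finset.sum_eq_zero
  intro p _
  have hc : (PowerSeries.coeff p.2) (Ty (tq n) i j)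
      = PowerSeries.C (tq n i j p.2) := by
    simp [Ty, PowerSeries.coeff_mk]
  rw [hc, PowerSeries.coeff_mul_C, mul_smul]
  have : tq n i j p.2 • ξ = 0 := hw3 i j hij p.2
  rw [this, smul_zero, map_zero]

lemma Phi_mul_Ty_diag (lam : Fin (NN n) → PowerSeries ℂ)
    (hw4 : ∀ (i : Fin (NN n)) (r : ℕ), TT n i i r • ξ = (PowerSeries.coeff r (lam i)) • ξ)
    (i : Fin (NN n)) (F : PowerSeries (PowerSeries (XX n))) :
    Phi θ ξ (F * Ty (tq n) i i) = Lamy lam i * Phi θ ξ F := by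
  apply PowerSeries.ext; intro r; apply PowerSeries.ext; intro s
  rw [coeff_Phi, PowerSeries.coeff_mul, map_sum, Finset.sum_smul, map_sum,
    PowerSeries.coeff_mul, map_sum]
  rw [sum_antidiag_swap r (fun a b => (PowerSeries.coeff s)
    ((PowerSeries.coeff a) (Lamy lam i) * (PowerSeries.coeff b) (Phi θ ξ F)))]
  apply Finset.sum_congr rfl
  intro p _
  have hc : (PowerSeries.coeff p.2) (Ty (tq n) i i)
      = PowerSeries.C (tq n i i p.2) := by
    simp [Ty, PowerSeries.coeff_mk]
  rw [hc, PowerSeries.coeff_mul_C, mul_smul]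
  have : tq n i i p.2 • ξ = (PowerSeries.coeff p.2 (lam i)) • ξ := hw4 i p.2
  rw [this, smul_comm_alg, map_smul]
  have hly : (PowerSeries.coeff p.2) (Lamy lam i)
      = PowerSeries.C (PowerSeries.coeff p.2 (lam i)) := by
    simp [Lamy, PowerSeries.coeff_mk]
  rw [hly, PowerSeries.coeff_C_mul, coeff_Phi]
  simp

lemma Phi_mul_Tx_lt (hw3 : ∀ (i j : Fin (NN n)), i < j → ∀ r : ℕ, TT n i j r • ξ = 0)
    {i j : Fin (NN n)} (hij : i < j) (F : PowerSeries (PowerSeries (XX n))) :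
    Phi θ ξ (F * Tx (tq n) i j) = 0 := by
  apply PowerSeries.ext; intro r; apply PowerSeries.ext; intro s
  rw [coeff_Phi]
  have h1 : (PowerSeries.coeff r) (F * Tx (tq n) i j)
      = (PowerSeries.coeff r) F * PowerSeries.mk (tq n i j) := by
    unfold Tx
    rw [PowerSeries.coeff_mul_C]
  rw [h1, PowerSeries.coeff_mul, Finset.sum_smul, map_sum, map_zero, map_zero]
  apply Finset.sum_eq_zero
  intro p _
  have hz : tq n i j p.2 • ξ = 0 := hw3 i j hij p.2
  rw [PowerSeries.coeff_mk, mul_smul, hz, smul_zero, map_zero]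

lemma Phi_mul_Tx_diag (lam : Fin (NN n) → PowerSeries ℂ)
    (hw4 : ∀ (i : Fin (NN n)) (r : ℕ), TT n i i r • ξ = (PowerSeries.coeff r (lam i)) • ξ)
    (i : Fin (NN n)) (F : PowerSeries (PowerSeries (XX n))) :
    Phi θ ξ (F * Tx (tq n) i i) = Lamx lam i * Phi θ ξ F := by
  apply PowerSeries.ext; intro r; apply PowerSeries.ext; intro s
  rw [coeff_Phi]
  have h1 : (PowerSeries.coeff r) (F * Tx (tq n) i i)
      = (PowerSeries.coeff r) F * PowerSeries.mk (tq n i i) := by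
    unfold Tx
    rw [PowerSeries.coeff_mul_C]
  have h2 : (PowerSeries.coeff r) (Lamx lam i * Phi θ ξ F)
      = lam i * (PowerSeries.coeff r) (Phi θ ξ F) := by
    unfold Lamx
    rw [PowerSeries.coeff_C_mul]
  rw [h1, h2, PowerSeries.coeff_mul, PowerSeries.coeff_mul, Finset.sum_smul, map_sum]
  rw [sum_antidiag_swap s (fun a b => (PowerSeries.coeff a) (lam i)
    * (PowerSeries.coeff b) ((PowerSeries.coeff r) (Phi θ ξ F)))]
  apply Finset.sum_congr rfl
  intro p _
  have hz : tq n i i p.2 • ξ = (PowerSeries.coeff p.2 (lam i)) • ξ := hw4 i p.2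
  rw [PowerSeries.coeff_mk, mul_smul, hz, smul_comm_alg, map_smul, coeff_Phi]
  simp

lemma Phi_algMul (σ : PowerSeries (PowerSeries ℂ)) (F : PowerSeries (PowerSeries (XX n))) :
    Phi θ ξ (AMap n σ * F) = σ * Phi θ ξ F := by
  apply PowerSeries.ext; intro r; apply PowerSeries.ext; intro s
  rw [coeff_Phi, PowerSeries.coeff_mul, map_sum, Finset.sum_smul, map_sum,
    PowerSeries.coeff_mul, map_sum]
  apply Finset.sum_congr rfl
  intro p _
  have h1 : (PowerSeries.coeff p.1) (AMap n σ)
      = PowerSeries.map ((Algebra.ofId ℂ (XX n)) : ℂ →+* XX n) ((PowerSeries.coeff p.1) σ) := by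
    simp [AMap, mapT, PowerSeries.coeff_map]
  rw [h1, PowerSeries.coeff_mul, PowerSeries.coeff_mul, Finset.sum_smul, map_sum]
  apply Finset.sum_congr rfl
  intro q _
  rw [PowerSeries.coeff_map, mul_smul]
  simp only [RingHom.coe_coe, Algebra.ofId_apply]
  rw [algebraMap_smul, map_smul, coeff_Phi]
  simp


end PhiMul

section Helpers

variable {n : ℕ}

lemma pb_pr (i : Fin (NN n)) : pb (pr i) = pb i := by
  have hi : (i : ℕ) < 2 * n + 1 := i.isLt
  simp only [pb, pr, idx]
  by_cases h : (i : ℕ) = n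
  · simp only [h]
    simp only [if_pos (by omega : 2 * n - n = n), if_pos rfl]
    simp
  · have : ¬ (2 * n - (i : ℕ) = n) := by omega
    simp [h, this]

lemma pb_ne (i : Fin (NN n)) (h : (i : ℕ) ≠ n) : pb i = 1 := by simp [pb, h]

lemma tau_le (i : Fin (NN n)) (h : (i : ℕ) ≤ n) : tau i = 1 := by simp [tau, h]

lemma sg_even {m : ℕ} (h : Even m) : sg m = 1 := by
  simpa [sg] using h.neg_one_pow

lemma sg_odd {m : ℕ} (h : Odd m) : sg m = -1 := by
  simpa [sg] using h.neg_one_pow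

lemma sg_add (a b : ℕ) : sg (a + b) = sg a * sg b := by simp [sg, pow_add]

lemma sg_mul_self (a : ℕ) : sg a * sg a = 1 := by
  simp [sg, ← pow_add]

lemma pr_lt_pr {i j : Fin (NN n)} (h : (j : ℕ) < (i : ℕ)) : pr i < pr j := by
  have hi : (i : ℕ) < 2 * n + 1 := i.isLt
  have hj : (j : ℕ) < 2 * n + 1 := j.isLt
  simp only [pr, idx, Fin.lt_def]
  omega

lemma fin_lt {i j : Fin (NN n)} (h : (i : ℕ) < (j : ℕ)) : i < j := h

end Helpers

section Eval

set_option linter.unusedSectionVars false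

variable {n : ℕ} {V : Type} [AddCommGroup V] [Module ℂ V] [Module (XX n) V]
  [IsScalarTower ℂ (XX n) V]
variable (θ : Module.Dual ℂ V) (ξ : V) (lam : Fin (NN n) → PowerSeries ℂ)

/-- `y − x` as a scalar series. -/
def wP : PowerSeries (PowerSeries ℂ) := Yv ℂ - Xv ℂ

/-- `y − x − κxy` as a scalar series. -/
def wQ (n : ℕ) : PowerSeries (PowerSeries ℂ) :=
  Yv ℂ - Xv ℂ - kappa n • (Xv ℂ * Yv ℂ)

/-- `θ(t_{cd}(u) t_{c′d′}(v) ξ)`. -/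
def XSe (c d : Fin (NN n)) : PowerSeries (PowerSeries ℂ) :=
  Phi θ ξ (Tx (tq n) c d * Ty (tq n) (pr c) (pr d))

/-- `θ(t_{c′d′}(v) t_{cd}(u) ξ)`. -/
def ZSe (c d : Fin (NN n)) : PowerSeries (PowerSeries ℂ) :=
  Phi θ ξ (Ty (tq n) (pr c) (pr d) * Tx (tq n) c d)

/-- `λ_{c′}(v) λ_c(u)`. -/
def Lams (c : Fin (NN n)) : PowerSeries (PowerSeries ℂ) :=
  Lamy lam (pr c) * Lamx lam c

lemma AMap_wP : AMap n wP = Yv (XX n) - Xv (XX n) := by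
  unfold wP AMap
  rw [map_sub, mapT_Yv, mapT_Xv]

lemma AMap_wQ : AMap n (wQ n) = Yv (XX n) - Xv (XX n) - kappa n • (Xv (XX n) * Yv (XX n)) := by
  unfold wQ AMap
  rw [map_sub, map_sub, mapT_smul, map_mul, mapT_Yv, mapT_Xv]

lemma AMap_xyQ : AMap n ((Xv ℂ * Yv ℂ) * wQ n)
    = (Xv (XX n) * Yv (XX n)) * (Yv (XX n) - Xv (XX n) - kappa n • (Xv (XX n) * Yv (XX n))) := by
  rw [map_mul, map_mul, AMap_wQ]
  unfold AMap
  rw [mapT_Yv, mapT_Xv]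

lemma AMap_xyP : AMap n ((Xv ℂ * Yv ℂ) * wP)
    = (Xv (XX n) * Yv (XX n)) * (Yv (XX n) - Xv (XX n)) := by
  rw [map_mul, map_mul, AMap_wP]
  unfold AMap
  rw [mapT_Yv, mapT_Xv]

lemma Phi_relL_eval (c d : Fin (NN n)) :
    Phi θ ξ (relL n (tq n) c d (pr c) (pr d)) =
      wP * (wQ n * (XSe θ ξ c d
        - sg ((pb c + pb d) * (pb (pr c) + pb (pr d))) • ZSe θ ξ c d)) := by
  unfold relL
  rw [mul_assoc, ← AMap_wQ (n := n), ← AMap_wP (n := n), Phi_algMul, Phi_algMul,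
    Phi_sub, Phi_smul]
  rfl

lemma Phi_relR_eval (c d : Fin (NN n)) :
    Phi θ ξ (relR n (tq n) c d (pr c) (pr d)) =
      ((Xv ℂ * Yv ℂ) * wQ n) * (sg (pb c * pb d + pb c * pb (pr c) + pb d * pb (pr c)) •
        (Phi θ ξ (Tx (tq n) (pr c) d * Ty (tq n) c (pr d))
          - Phi θ ξ (Ty (tq n) (pr c) d * Tx (tq n) c (pr d))))
      - ((Xv ℂ * Yv ℂ) * wP) *
        ((∑ p : Fin (NN n), (sg (pb c + pb c * pb d + pb d * pb p) * tau c * tau p) • XSe θ ξ p d)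
         - (∑ p : Fin (NN n), (sg (pb d + pb p + pb c * pb (pr c) + pb d * pb (pr c) + pb c * pb p)
              * tau d * tau p) • ZSe θ ξ c p)) := by
  unfold relR
  rw [if_pos rfl, if_pos rfl, ← AMap_xyQ, ← AMap_xyP]
  rw [Phi_sub, Phi_algMul, Phi_algMul, Phi_smul, Phi_sub, Phi_sub, Phi_sum, Phi_sum]
  congr 2
  congr 1
  · apply Finset.sum_congr rfl
    intro p _
    rw [Phi_smul]
    rfl
  · apply Finset.sum_congr rfl
    intro p _
    rw [Phi_smul]
    rfl

end Eval

section Derive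

set_option linter.unusedSectionVars false

variable {n : ℕ} {V : Type} [AddCommGroup V] [Module ℂ V] [Module (XX n) V]
  [IsScalarTower ℂ (XX n) V]
variable (θ : Module.Dual ℂ V) (ξ : V) (lam : Fin (NN n) → PowerSeries ℂ)

/-- The embedding `ℂ → ℂ⟦x⟧⟦y⟧`. -/
def cc (z : ℂ) : PowerSeries (PowerSeries ℂ) :=
  PowerSeries.C (PowerSeries.C z)

lemma smul_eq_cc (z : ℂ) (F : PowerSeries (PowerSeries ℂ)) : z • F = cc z * F := by
  apply PowerSeries.ext; intro r; apply PowerSeries.ext; intro s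
  rw [PowerSeries.coeff_smul, PowerSeries.coeff_smul, cc, PowerSeries.coeff_C_mul,
    PowerSeries.coeff_C_mul]
  simp

lemma cc_mul (z w : ℂ) : cc (z * w) = cc z * cc w := by
  unfold cc
  rw [map_mul, map_mul]

lemma cc_one : cc 1 = 1 := by unfold cc; rw [map_one, map_one]

lemma Xv_ne : (Xv ℂ) ≠ 0 := by
  intro h
  have := congrArg (PowerSeries.coeff 0) h
  rw [Xv, PowerSeries.coeff_zero_C, map_zero] at this
  exact PowerSeries.X_ne_zero this

lemma Yv_ne : (Yv ℂ) ≠ 0 := PowerSeries.X_ne_zero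

lemma wP_ne : (wP : PowerSeries (PowerSeries ℂ)) ≠ 0 := by
  intro h
  have := congrArg (PowerSeries.coeff 1) h
  rw [wP, map_sub, Xv, Yv, PowerSeries.coeff_one_X, PowerSeries.coeff_C, map_zero] at this
  simp at this

lemma xyP_ne : ((Xv ℂ * Yv ℂ) * wP) ≠ 0 := mul_ne_zero (mul_ne_zero Xv_ne Yv_ne) wP_ne

lemma Phi_Tx_diag (hθ : θ ξ = 1)
    (hw4 : ∀ (i : Fin (NN n)) (r : ℕ), TT n i i r • ξ = (PowerSeries.coeff r (lam i)) • ξ)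
    (i : Fin (NN n)) : Phi θ ξ (Tx (tq n) i i) = Lamx lam i := by
  rw [← one_mul (Tx (tq n) i i), Phi_mul_Tx_diag θ ξ lam hw4, Phi_one θ ξ hθ, mul_one]

lemma Phi_Ty_diag (hθ : θ ξ = 1)
    (hw4 : ∀ (i : Fin (NN n)) (r : ℕ), TT n i i r • ξ = (PowerSeries.coeff r (lam i)) • ξ)
    (i : Fin (NN n)) : Phi θ ξ (Ty (tq n) i i) = Lamy lam i := by
  rw [← one_mul (Ty (tq n) i i), Phi_mul_Ty_diag θ ξ lam hw4, Phi_one θ ξ hθ, mul_one]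

lemma XSe_vanish (hw3 : ∀ (i j : Fin (NN n)), i < j → ∀ r : ℕ, TT n i j r • ξ = 0)
    {c d : Fin (NN n)} (h : (d : ℕ) < (c : ℕ)) : XSe θ ξ c d = 0 :=
  Phi_mul_Ty_lt θ ξ hw3 (pr_lt_pr h) _

lemma ZSe_vanish (hw3 : ∀ (i j : Fin (NN n)), i < j → ∀ r : ℕ, TT n i j r • ξ = 0)
    {c d : Fin (NN n)} (h : (c : ℕ) < (d : ℕ)) : ZSe θ ξ c d = 0 :=
  Phi_mul_Tx_lt θ ξ hw3 (fin_lt h) _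

lemma XSe_diag (hθ : θ ξ = 1)
    (hw4 : ∀ (i : Fin (NN n)) (r : ℕ), TT n i i r • ξ = (PowerSeries.coeff r (lam i)) • ξ)
    (c : Fin (NN n)) : XSe θ ξ c c = Lams lam c := by
  unfold XSe Lams
  rw [Phi_mul_Ty_diag θ ξ lam hw4, Phi_Tx_diag θ ξ lam hθ hw4]

lemma ZSe_diag (hθ : θ ξ = 1)
    (hw4 : ∀ (i : Fin (NN n)) (r : ℕ), TT n i i r • ξ = (PowerSeries.coeff r (lam i)) • ξ)
    (c : Fin (NN n)) : ZSe θ ξ c c = Lams lam c := by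
  unfold ZSe Lams
  rw [Phi_mul_Tx_diag θ ξ lam hw4, Phi_Ty_diag θ ξ lam hθ hw4, mul_comm]

/-- `S_d = Σ_p (−1)^{d̄p̄} τ_p θ(t_{pd}(u) t_{p′d′}(v) ξ)`. -/
def SSe (d : Fin (NN n)) : PowerSeries (PowerSeries ℂ) :=
  ∑ p : Fin (NN n), (sg (pb d * pb p) * tau p) • XSe θ ξ p d

/-- `T_c = Σ_p (−1)^{p̄(1+c̄)} τ_p θ(t_{c′p′}(v) t_{cp}(u) ξ)`. -/
def TSe (c : Fin (NN n)) : PowerSeries (PowerSeries ℂ) :=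
  ∑ p : Fin (NN n), (sg (pb p * (1 + pb c)) * tau p) • ZSe θ ξ c p

lemma key (c d : Fin (NN n)) :
    wP * (wQ n * (XSe θ ξ c d
        - sg ((pb c + pb d) * (pb (pr c) + pb (pr d))) • ZSe θ ξ c d)) =
      ((Xv ℂ * Yv ℂ) * wQ n) * (sg (pb c * pb d + pb c * pb (pr c) + pb d * pb (pr c)) •
        (Phi θ ξ (Tx (tq n) (pr c) d * Ty (tq n) c (pr d))
          - Phi θ ξ (Ty (tq n) (pr c) d * Tx (tq n) c (pr d))))
      - ((Xv ℂ * Yv ℂ) * wP) *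
        ((∑ p : Fin (NN n), (sg (pb c + pb c * pb d + pb d * pb p) * tau c * tau p) • XSe θ ξ p d)
         - (∑ p : Fin (NN n), (sg (pb d + pb p + pb c * pb (pr c) + pb d * pb (pr c) + pb c * pb p)
              * tau d * tau p) • ZSe θ ξ c p)) := by
  rw [← Phi_relL_eval θ ξ, ← Phi_relR_eval θ ξ, rel_tq]

end Derive

section Derive2

set_option linter.unusedSectionVars false

variable {n : ℕ} {V : Type} [AddCommGroup V] [Module ℂ V] [Module (XX n) V]
  [IsScalarTower ℂ (XX n) V]
variable (θ : Module.Dual ℂ V) (ξ : V) (lam : Fin (NN n) → PowerSeries ℂ)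

lemma D1 (hθ : θ ξ = 1)
    (hw3 : ∀ (i j : Fin (NN n)), i < j → ∀ r : ℕ, TT n i j r • ξ = 0)
    (hw4 : ∀ (i : Fin (NN n)) (r : ℕ), TT n i i r • ξ = (PowerSeries.coeff r (lam i)) • ξ)
    {c : Fin (NN n)} (hc : (c : ℕ) ≤ n) :
    SSe θ ξ c = sg (pb c) • TSe θ ξ c := by
  have hkey := key θ ξ c c
  rw [XSe_diag θ ξ lam hθ hw4, ZSe_diag θ ξ lam hθ hw4] at hkey
  have hsgL : sg ((pb c + pb c) * (pb (pr c) + pb (pr c))) = 1 :=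
    sg_even ((Even.add_self (pb c)).mul_right _)
  rw [hsgL, one_smul, sub_self, mul_zero, mul_zero] at hkey
  have hA : Phi θ ξ (Tx (tq n) (pr c) c * Ty (tq n) c (pr c))
      - Phi θ ξ (Ty (tq n) (pr c) c * Tx (tq n) c (pr c)) = 0 := by
    by_cases hcn : (c : ℕ) = n
    · have hprc : pr c = c := by
        apply Fin.ext
        simp only [pr, idx, hcn]
        omega
      rw [hprc, Phi_mul_Ty_diag θ ξ lam hw4, Phi_mul_Tx_diag θ ξ lam hw4,
        Phi_Tx_diag θ ξ lam hθ hw4, Phi_Ty_diag θ ξ lam hθ hw4, mul_comm, sub_self]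
    · have h1 : (c : ℕ) < ((pr c) : ℕ) := by
        have := c.isLt
        simp only [pr, idx]
        omega
      rw [Phi_mul_Ty_lt θ ξ hw3 (fin_lt h1), Phi_mul_Tx_lt θ ξ hw3 (fin_lt h1), sub_self]
  rw [hA, smul_zero, mul_zero, zero_sub] at hkey
  have h3 : ((Xv ℂ * Yv ℂ) * wP) *
      ((∑ p : Fin (NN n), (sg (pb c + pb c * pb c + pb c * pb p) * tau c * tau p) • XSe θ ξ p c)
       - (∑ p : Fin (NN n), (sg (pb c + pb p + pb c * pb (pr c) + pb c * pb (pr c) + pb c * pb p)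
            * tau c * tau p) • ZSe θ ξ c p)) = 0 :=
    neg_eq_zero.mp hkey.symm
  have h4 := (mul_eq_zero.mp h3).resolve_left xyP_ne
  have h5 := sub_eq_zero.mp h4
  have hB1 : (∑ p : Fin (NN n), (sg (pb c + pb c * pb c + pb c * pb p) * tau c * tau p) • XSe θ ξ p c)
      = SSe θ ξ c := by
    unfold SSe
    apply Finset.sum_congr rfl
    intro p _
    congr 1
    rw [tau_le c hc, mul_one]
    by_cases h1 : (c : ℕ) = n <;> by_cases h2 : (p : ℕ) = n <;>
      simp [pb, h1, h2, sg] <;> norm_num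
  have hB2 : (∑ p : Fin (NN n), (sg (pb c + pb p + pb c * pb (pr c) + pb c * pb (pr c) + pb c * pb p)
        * tau c * tau p) • ZSe θ ξ c p) = sg (pb c) • TSe θ ξ c := by
    unfold TSe
    rw [Finset.smul_sum]
    apply Finset.sum_congr rfl
    intro p _
    rw [smul_smul]
    congr 1
    rw [tau_le c hc, pb_pr]
    by_cases h1 : (c : ℕ) = n <;> by_cases h2 : (p : ℕ) = n <;>
      simp [pb, h1, h2, sg] <;> norm_num
  rw [hB1, hB2] at h5
  exact h5

lemma D2 (hθ : θ ξ = 1)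
    (hw3 : ∀ (i j : Fin (NN n)), i < j → ∀ r : ℕ, TT n i j r • ξ = 0)
    (hw4 : ∀ (i : Fin (NN n)) (r : ℕ), TT n i i r • ξ = (PowerSeries.coeff r (lam i)) • ξ)
    {c d : Fin (NN n)} (hdc : (d : ℕ) < (c : ℕ)) (hc : (c : ℕ) ≤ n) :
    wQ n * ZSe θ ξ c d
      = sg (pb c + 1) • ((Xv ℂ * Yv ℂ) * (SSe θ ξ d + TSe θ ξ c)) := by
  have hkey := key θ ξ c d
  rw [XSe_vanish θ ξ hw3 hdc, zero_sub] at hkey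
  have h1 : (c : ℕ) < ((pr d) : ℕ) := by
    have := c.isLt
    have := d.isLt
    simp only [pr, idx]
    omega
  rw [Phi_mul_Ty_lt θ ξ hw3 (fin_lt h1), Phi_mul_Tx_lt θ ξ hw3 (fin_lt h1), sub_self,
    smul_zero, mul_zero, zero_sub, mul_neg, mul_neg, neg_inj] at hkey
  -- convert the two sums
  have hpd : pb d = 1 := pb_ne d (by omega)
  have hB1 : (∑ p : Fin (NN n), (sg (pb c + pb c * pb d + pb d * pb p) * tau c * tau p) • XSe θ ξ p d)
      = SSe θ ξ d := by
    unfold SSe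
    apply Finset.sum_congr rfl
    intro p _
    congr 1
    rw [tau_le c hc, mul_one, hpd]
    by_cases h1 : (c : ℕ) = n <;> by_cases h2 : (p : ℕ) = n <;>
      simp [pb, h1, h2, sg] <;> norm_num
  have hB2 : (∑ p : Fin (NN n), (sg (pb d + pb p + pb c * pb (pr c) + pb d * pb (pr c) + pb c * pb p)
        * tau d * tau p) • ZSe θ ξ c p) = (-1 : ℂ) • TSe θ ξ c := by
    unfold TSe
    rw [Finset.smul_sum]
    apply Finset.sum_congr rfl
    intro p _
    rw [smul_smul]
    congr 1
    rw [tau_le d (by omega), pb_pr, hpd]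
    by_cases h1 : (c : ℕ) = n <;> by_cases h2 : (p : ℕ) = n <;>
      simp [pb, h1, h2, sg] <;> norm_num
  rw [hB1, hB2] at hkey
  -- now hkey : wP * (wQ n * (sgL • ZSe c d)) = xyP * (SSe d - (-1) • TSe c)
  have hsgL : sg ((pb c + pb d) * (pb (pr c) + pb (pr d))) = sg (pb c + 1) := by
    rw [pb_pr, pb_pr, hpd]
    by_cases h1 : (c : ℕ) = n <;> simp [pb, h1, sg] <;> norm_num
  rw [hsgL] at hkey
  rw [smul_eq_cc] at hkey
  have hform : ((Xv ℂ * Yv ℂ) * wP) * (SSe θ ξ d - (-1 : ℂ) • TSe θ ξ c)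
      = wP * ((Xv ℂ * Yv ℂ) * (SSe θ ξ d + TSe θ ξ c)) := by
    rw [smul_eq_cc]
    have : cc (-1 : ℂ) = -1 := by
      unfold cc; rw [map_neg, map_neg, map_one, map_one]
    rw [this]
    ring
  rw [hform] at hkey
  have hcanc := mul_left_cancel₀ wP_ne hkey
  -- hcanc : wQ n * (cc (sg (pb c + 1)) * ZSe c d) = (Xv*Yv) * (SSe d + TSe c)
  have hsq : cc (sg (pb c + 1)) * cc (sg (pb c + 1)) = 1 := by
    rw [← cc_mul, sg_mul_self, cc_one]
  rw [smul_eq_cc]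
  linear_combination (cc (sg (pb c + 1))) * hcanc - (wQ n * ZSe θ ξ c d) * hsq

end Derive2

section Derive3

set_option linter.unusedSectionVars false

variable {n : ℕ} {V : Type} [AddCommGroup V] [Module ℂ V] [Module (XX n) V]
  [IsScalarTower ℂ (XX n) V]
variable (θ : Module.Dual ℂ V) (ξ : V) (lam : Fin (NN n) → PowerSeries ℂ)

/-- `T_c` as a function of a natural index. -/
def TSn (p : ℕ) : PowerSeries (PowerSeries ℂ) :=
  if h : p < NN n then TSe θ ξ ⟨p, h⟩ else 0

lemma fin_sum_trunc (f : Fin (NN n) → PowerSeries (PowerSeries ℂ)) (c : ℕ) (hcN : c < NN n)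
    (hvanish : ∀ p : Fin (NN n), c < (p : ℕ) → f p = 0) :
    ∑ p : Fin (NN n), f p
      = ∑ p ∈ Finset.range (c + 1), (if h : p < NN n then f ⟨p, h⟩ else 0) := by
  have h1 : ∑ p : Fin (NN n), f p
      = ∑ p ∈ Finset.range (NN n), (if h : p < NN n then f ⟨p, h⟩ else 0) := by
    rw [← Fin.sum_univ_eq_sum_range]
    apply Finset.sum_congr rfl
    intro p _
    rw [dif_pos p.isLt]
  rw [h1]
  apply (Finset.sum_subset (Finset.range_subset_range.mpr (by omega)) ?_).symm
  intro p hp hnp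
  simp only [Finset.mem_range] at hp hnp
  rw [dif_pos hp]
  exact hvanish ⟨p, hp⟩ (by simp only [Fin.val_mk]; omega)

lemma Rc (hθ : θ ξ = 1)
    (hw3 : ∀ (i j : Fin (NN n)), i < j → ∀ r : ℕ, TT n i j r • ξ = 0)
    (hw4 : ∀ (i : Fin (NN n)) (r : ℕ), TT n i i r • ξ = (PowerSeries.coeff r (lam i)) • ξ)
    {c : ℕ} (hc : c ≤ n) :
    wQ n * TSn (n := n) θ ξ c
      = wQ n * Lams lam (idx c (by omega))
        + ((c : ℕ) : PowerSeries (PowerSeries ℂ)) * ((Xv ℂ * Yv ℂ) * TSn (n := n) θ ξ c)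
        - (Xv ℂ * Yv ℂ) * ∑ p ∈ Finset.range c, TSn (n := n) θ ξ p := by
  have hcN : c < NN n := by have : NN n = 2 * n + 1 := rfl; omega
  have hTSn : TSn (n := n) θ ξ c = TSe θ ξ ⟨c, hcN⟩ := dif_pos hcN
  rw [hTSn]
  have hmul : wQ n * TSe θ ξ ⟨c, hcN⟩
      = ∑ p : Fin (NN n),
          (sg (pb p * (1 + pb (⟨c, hcN⟩ : Fin (NN n)))) * tau p) • (wQ n * ZSe θ ξ ⟨c, hcN⟩ p) := by
    unfold TSe
    rw [Finset.mul_sum]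
    exact Finset.sum_congr rfl fun p _ => mul_smul_comm _ _ _
  rw [hmul]
  have hvan : ∀ p : Fin (NN n), c < (p : ℕ) →
      (sg (pb p * (1 + pb (⟨c, hcN⟩ : Fin (NN n)))) * tau p) • (wQ n * ZSe θ ξ ⟨c, hcN⟩ p) = 0 := by
    intro p hp
    rw [ZSe_vanish θ ξ hw3 hp, mul_zero, smul_zero]
  rw [fin_sum_trunc _ c hcN hvan, Finset.sum_range_succ, dif_pos hcN]
  have hdiag : (sg (pb (⟨c, hcN⟩ : Fin (NN n)) * (1 + pb (⟨c, hcN⟩ : Fin (NN n))))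
      * tau (⟨c, hcN⟩ : Fin (NN n))) = 1 := by
    by_cases h1 : c = n <;> simp [pb, tau, h1, sg, hc] <;> norm_num
  rw [hdiag, one_smul, ZSe_diag θ ξ lam hθ hw4]
  have hsum : ∑ p ∈ Finset.range c, (if h : p < NN n then
      (sg (pb (⟨p, h⟩ : Fin (NN n)) * (1 + pb (⟨c, hcN⟩ : Fin (NN n)))) * tau ⟨p, h⟩)
        • (wQ n * ZSe θ ξ ⟨c, hcN⟩ ⟨p, h⟩) else 0)
      = ∑ p ∈ Finset.range c,
        ((Xv ℂ * Yv ℂ) * TSe θ ξ ⟨c, hcN⟩ - (Xv ℂ * Yv ℂ) * TSn (n := n) θ ξ p) := by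
    apply Finset.sum_congr rfl
    intro p hp
    rw [Finset.mem_range] at hp
    have hpN : p < NN n := by have : NN n = 2 * n + 1 := rfl; omega
    rw [dif_pos hpN]
    have hpb : pb (⟨p, hpN⟩ : Fin (NN n)) = 1 := pb_ne _ (by simp only [Fin.val_mk]; omega)
    have htau : tau (⟨p, hpN⟩ : Fin (NN n)) = 1 := tau_le _ (by simp only [Fin.val_mk]; omega)
    have hD2 := D2 θ ξ lam hθ hw3 hw4
      (c := ⟨c, hcN⟩) (d := ⟨p, hpN⟩) (by simp only [Fin.val_mk]; omega)
      (by simp only [Fin.val_mk]; omega)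
    have hD1 := D1 θ ξ lam hθ hw3 hw4 (c := ⟨p, hpN⟩) (by simp only [Fin.val_mk]; omega)
    have hTSnp : TSn (n := n) θ ξ p = TSe θ ξ ⟨p, hpN⟩ := dif_pos hpN
    rw [hD2, hD1, hpb, htau, hTSnp]
    have hsg1 : sg 1 = (-1 : ℂ) := by norm_num [sg]
    have hcoef : sg (1 + pb (⟨c, hcN⟩ : Fin (NN n))) * sg (pb (⟨c, hcN⟩ : Fin (NN n)) + 1)
        = 1 := by
      rw [Nat.add_comm 1 (pb (⟨c, hcN⟩ : Fin (NN n)))]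
      exact sg_mul_self _
    rw [one_mul, mul_one, smul_smul, hcoef, one_smul, hsg1, neg_one_smul]
    ring
  rw [hsum, Finset.sum_sub_distrib, Finset.sum_const, Finset.card_range, ← Finset.mul_sum,
    nsmul_eq_mul]
  have hidx : (idx c (by omega : c < 2 * n + 1) : Fin (NN n)) = ⟨c, hcN⟩ := rfl
  rw [hidx]
  ring

end Derive3

section EsubSec

/-- The series `σ = x/(1−βx) = Σ_{k≥1} β^{k−1} x^k`. -/
def sigv (β : ℂ) : PowerSeries ℂ :=
  PowerSeries.mk fun k => if k = 0 then 0 else β ^ (k - 1)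

lemma sigv_eq (β : ℂ) :
    sigv β = PowerSeries.X * PowerSeries.rescale β ((PowerSeries.invOneSubPow ℂ 1).val) := by
  apply PowerSeries.ext
  intro k
  cases k with
  | zero => simp [sigv, PowerSeries.coeff_mk, PowerSeries.coeff_zero_X_mul]
  | succ k =>
    rw [PowerSeries.coeff_succ_X_mul, PowerSeries.coeff_rescale]
    simp [sigv, PowerSeries.invOneSubPow_val_succ_eq_mk_add_choose, PowerSeries.coeff_mk]

lemma X_dvd_sigv (β : ℂ) : (PowerSeries.X : PowerSeries ℂ) ∣ sigv β :=
  ⟨_, sigv_eq β⟩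

lemma coeff_mul_sigv_pow_eq_zero (β : ℂ) {h : PowerSeries ℂ} {s m : ℕ} (hms : m < s) :
    PowerSeries.coeff m (h * (sigv β) ^ s) = 0 := by
  have hdvd : (PowerSeries.X : PowerSeries ℂ) ^ s ∣ h * (sigv β) ^ s :=
    Dvd.dvd.mul_left (pow_dvd_pow_of_dvd (X_dvd_sigv β) s) h
  exact PowerSeries.X_pow_dvd_iff.mp hdvd m hms

lemma sigv_pow_eq (β : ℂ) (s : ℕ) :
    (sigv β) ^ s = PowerSeries.X ^ s
      * PowerSeries.rescale β ((PowerSeries.invOneSubPow ℂ s).val) := by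
  rw [sigv_eq, mul_pow, ← map_pow]
  congr 2
  rw [← Units.val_pow_eq_pow_val]
  congr 1
  rw [PowerSeries.invOneSubPow_eq_inv_one_sub_pow (S := ℂ) (d := 1), pow_one,
    ← PowerSeries.invOneSubPow_eq_inv_one_sub_pow]

lemma coeff_sigv_pow (β : ℂ) (s m : ℕ) (hsm : s ≤ m) (hs : 0 < s) :
    PowerSeries.coeff m ((sigv β) ^ s)
      = (Nat.choose (m - 1) (m - s) : ℂ) * β ^ (m - s) := by
  rw [sigv_pow_eq]
  have hm : (m - s) + s = m := by omega
  have key := PowerSeries.coeff_X_pow_mul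
    (PowerSeries.rescale β ((PowerSeries.invOneSubPow ℂ s).val)) s (m - s)
  rw [hm] at key
  rw [key, PowerSeries.coeff_rescale,
    PowerSeries.invOneSubPow_val_eq_mk_sub_one_add_choose_of_pos _ _ hs, PowerSeries.coeff_mk]
  have h1 : s - 1 + (m - s) = m - 1 := by omega
  have h2 : Nat.choose (m - 1) (s - 1) = Nat.choose (m - 1) (m - s) := by
    rw [← Nat.choose_symm (by omega : s - 1 ≤ m - 1)]
    congr 1
    omega
  rw [h1, h2]
  ring

lemma coeff_sigv_pow_zero (β : ℂ) (m : ℕ) :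
    PowerSeries.coeff m ((sigv β) ^ 0) = if m = 0 then 1 else 0 := by
  rw [pow_zero, PowerSeries.coeff_one]

/-- Substitution `y ↦ σ(x)` on `ℂ⟦x⟧⟦y⟧`, well defined since `σ` has positive order. -/
def Esub (β : ℂ) (F : PowerSeries (PowerSeries ℂ)) : PowerSeries ℂ :=
  PowerSeries.mk fun m => ∑ s ∈ Finset.range (m + 1),
    PowerSeries.coeff m ((PowerSeries.coeff s F) * (sigv β) ^ s)

lemma coeff_Esub (β : ℂ) (F : PowerSeries (PowerSeries ℂ)) (m : ℕ) :
    PowerSeries.coeff m (Esub β F) = ∑ s ∈ Finset.range (m + 1),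
      PowerSeries.coeff m ((PowerSeries.coeff s F) * (sigv β) ^ s) := by
  simp [Esub, PowerSeries.coeff_mk]

lemma Esub_sub (β : ℂ) (F G : PowerSeries (PowerSeries ℂ)) :
    Esub β (F - G) = Esub β F - Esub β G := by
  apply PowerSeries.ext
  intro m
  simp [coeff_Esub, sub_mul, Finset.sum_sub_distrib]

lemma Esub_add (β : ℂ) (F G : PowerSeries (PowerSeries ℂ)) :
    Esub β (F + G) = Esub β F + Esub β G := by
  apply PowerSeries.ext
  intro m
  simp [coeff_Esub, add_mul, Finset.sum_add_distrib]

lemma Esub_Cmul (β : ℂ) (r : PowerSeries ℂ) (F : PowerSeries (PowerSeries ℂ)) :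
    Esub β (PowerSeries.C r * F) = r * Esub β F := by
  apply PowerSeries.ext
  intro m
  rw [coeff_Esub, PowerSeries.coeff_mul]
  have step1 : ∀ s : ℕ,
      PowerSeries.coeff m
        ((PowerSeries.coeff s) (PowerSeries.C r * F) * sigv β ^ s)
      = ∑ p ∈ Finset.HasAntidiagonal.antidiagonal m, PowerSeries.coeff p.1 r *
          PowerSeries.coeff p.2 ((PowerSeries.coeff s) F * sigv β ^ s) := by
    intro s
    rw [PowerSeries.coeff_C_mul, mul_assoc, PowerSeries.coeff_mul]
  simp only [step1]
  rw [Finset.sum_comm]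
  apply Finset.sum_congr rfl
  intro p hp
  rw [coeff_Esub, Finset.mul_sum]
  refine (Finset.sum_subset
    (Finset.range_subset_range.mpr (by
      have := Finset.HasAntidiagonal.antidiagonal.snd_le hp
      omega)) ?_).symm
  intro t ht hnt
  simp only [Finset.mem_range] at ht hnt
  rw [coeff_mul_sigv_pow_eq_zero β (by omega), mul_zero]

lemma Esub_ymul (β : ℂ) (F : PowerSeries (PowerSeries ℂ)) :
    Esub β (PowerSeries.X * F) = sigv β * Esub β F := by
  apply PowerSeries.ext
  intro m
  rw [coeff_Esub, PowerSeries.coeff_mul m (sigv β) (Esub β F), Finset.sum_range_succ']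
  have h0 : PowerSeries.coeff m
      ((PowerSeries.coeff 0) (PowerSeries.X * F) * sigv β ^ 0) = 0 := by
    rw [PowerSeries.coeff_zero_X_mul]
    simp
  rw [h0, add_zero]
  have hterm : ∀ s : ℕ, (PowerSeries.coeff (s + 1)) (PowerSeries.X * F)
        * sigv β ^ (s + 1)
      = sigv β * ((PowerSeries.coeff s) F * sigv β ^ s) := by
    intro s
    rw [PowerSeries.coeff_succ_X_mul]
    ring
  simp only [hterm]
  have hcm : ∀ s : ℕ, PowerSeries.coeff m
        (sigv β * ((PowerSeries.coeff s) F * sigv β ^ s))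
      = ∑ p ∈ Finset.HasAntidiagonal.antidiagonal m, PowerSeries.coeff p.1 (sigv β)
          * PowerSeries.coeff p.2 ((PowerSeries.coeff s) F * sigv β ^ s) :=
    fun s => PowerSeries.coeff_mul m _ _
  simp only [hcm]
  rw [Finset.sum_comm]
  apply Finset.sum_congr rfl
  intro p hp
  rw [coeff_Esub, Finset.mul_sum]
  by_cases hp1 : p.1 = 0
  · have hz : PowerSeries.coeff p.1 (sigv β) = 0 := by
      simp [sigv, PowerSeries.coeff_mk, hp1]
    simp [hz]
  · refine (Finset.sum_subset (Finset.range_subset_range.mpr ?_) ?_).symm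
    · have h2 : p.1 + p.2 = m := Finset.HasAntidiagonal.mem_antidiagonal.mp hp
      omega
    · intro t ht hnt
      simp only [Finset.mem_range] at ht hnt
      rw [coeff_mul_sigv_pow_eq_zero β (by omega), mul_zero]

end EsubSec

section FinalSec

set_option linter.unusedSectionVars false

variable {n : ℕ} {V : Type} [AddCommGroup V] [Module ℂ V] [Module (XX n) V]
  [IsScalarTower ℂ (XX n) V]
variable (θ : Module.Dual ℂ V) (ξ : V) (lam : Fin (NN n) → PowerSeries ℂ)

lemma keyfinal (hθ : θ ξ = 1)
    (hw3 : ∀ (i j : Fin (NN n)), i < j → ∀ r : ℕ, TT n i j r • ξ = 0)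
    (hw4 : ∀ (i : Fin (NN n)) (r : ℕ), TT n i i r • ξ = (PowerSeries.coeff r (lam i)) • ξ)
    {c : ℕ} (hc : c + 1 ≤ n) :
    (wQ n - (((c : ℕ) : PowerSeries (PowerSeries ℂ)) + 1) * (Xv ℂ * Yv ℂ))
        * (TSn (n := n) θ ξ (c + 1) - TSn (n := n) θ ξ c)
      = wQ n * (Lams lam (idx (c + 1) (by omega)) - Lams lam (idx c (by omega))) := by
  have h1 := Rc θ ξ lam hθ hw3 hw4 (c := c) (by omega)
  have h2 := Rc θ ξ lam hθ hw3 hw4 (c := c + 1) hc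
  rw [Finset.sum_range_succ] at h2
  push_cast at h2 ⊢
  linear_combination h2 - h1

lemma g1_sigv (β : ℂ) :
    ((1 : PowerSeries ℂ) - β • PowerSeries.X) * sigv β = PowerSeries.X := by
  apply PowerSeries.ext
  intro k
  rw [sub_mul, one_mul, smul_mul_assoc, map_sub, PowerSeries.coeff_smul]
  match k with
  | 0 => simp [sigv, PowerSeries.coeff_mk, PowerSeries.coeff_zero_X_mul, PowerSeries.coeff_X]
  | 1 => simp [sigv, PowerSeries.coeff_mk, PowerSeries.coeff_succ_X_mul, PowerSeries.coeff_X]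
  | (k + 2) =>
    rw [PowerSeries.coeff_succ_X_mul]
    simp [sigv, PowerSeries.coeff_mk, PowerSeries.coeff_X, pow_succ]
    ring

lemma sigv_ne (β : ℂ) : sigv β ≠ 0 := by
  intro h
  have := congrArg (PowerSeries.coeff 1) h
  simp [sigv, PowerSeries.coeff_mk] at this

lemma Esub_Lamy (a : ℂ) (j : Fin (NN n)) :
    Esub (-a) (Lamy lam j) = shiftSeries a (lam j) := by
  apply PowerSeries.ext
  intro m
  rw [coeff_Esub]
  have hR : PowerSeries.coeff m (shiftSeries a (lam j))
      = ∑ r ∈ Finset.range (m + 1),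
          ((-1 : ℂ) ^ (m - r) * (Nat.choose (m - 1) (m - r) : ℂ) * a ^ (m - r))
            * (PowerSeries.coeff r (lam j)) := by
    rw [shiftSeries, PowerSeries.coeff_mk, shiftCoeff]
    apply Finset.sum_congr rfl
    intro r _
    rw [smul_eq_mul]
  rw [hR]
  apply Finset.sum_congr rfl
  intro s hs
  rw [Finset.mem_range] at hs
  have hLy : (PowerSeries.coeff s) (Lamy lam j)
      = PowerSeries.C (PowerSeries.coeff s (lam j)) := by
    simp [Lamy, PowerSeries.coeff_mk]
  rw [hLy, PowerSeries.coeff_C_mul]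
  rcases Nat.eq_zero_or_pos s with h0 | hpos
  · subst h0
    rw [coeff_sigv_pow_zero]
    rcases Nat.eq_zero_or_pos m with hm | hm
    · subst hm; simp
    · rw [if_neg (by omega), Nat.choose_eq_zero_of_lt (by omega)]
      ring
  · rw [coeff_sigv_pow (-a) s m (by omega) hpos]
    have hnp : (-a) ^ (m - s) = (-1 : ℂ) ^ (m - s) * a ^ (m - s) := neg_pow a (m - s)
    rw [hnp]
    ring

lemma lam_step (hθ : θ ξ = 1)
    (hw3 : ∀ (i j : Fin (NN n)), i < j → ∀ r : ℕ, TT n i j r • ξ = 0)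
    (hw4 : ∀ (i : Fin (NN n)) (r : ℕ), TT n i i r • ξ = (PowerSeries.coeff r (lam i)) • ξ)
    {c : ℕ} (hc : c + 1 ≤ n) :
    lam (idx c (by omega)) * shiftSeries ((n : ℂ) - (c : ℂ) - 1 / 2) (lam (pr (idx c (by omega))))
      = lam (idx (c + 1) (by omega))
        * shiftSeries ((n : ℂ) - (c : ℂ) - 1 / 2) (lam (pr (idx (c + 1) (by omega)))) := by
  set a : ℂ := (n : ℂ) - (c : ℂ) - 1 / 2 with ha
  set β : ℂ := kappa n + (c : ℂ) + 1 with hβ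
  have hba : β = -a := by
    rw [hβ, ha, kappa]
    ring
  set g1 : PowerSeries ℂ := (1 : PowerSeries ℂ) - β • PowerSeries.X with hg1
  have hkf := keyfinal θ ξ lam hθ hw3 hw4 hc
  set DT : PowerSeries (PowerSeries ℂ) :=
    TSn (n := n) θ ξ (c + 1) - TSn (n := n) θ ξ c with hDT
  set DL : PowerSeries (PowerSeries ℂ) :=
    Lams lam (idx (c + 1) (by omega)) - Lams lam (idx c (by omega)) with hDL
  have hXv : Xv ℂ = PowerSeries.C PowerSeries.X := rfl
  have hYv : Yv ℂ = (PowerSeries.X : PowerSeries (PowerSeries ℂ)) := rfl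
  have hcc : ((c : ℕ) : PowerSeries (PowerSeries ℂ)) = cc ((c : ℕ) : ℂ) := by
    simp [cc]
  have hccβ : cc β = cc (kappa n) + cc ((c : ℕ) : ℂ) + 1 := by
    rw [hβ]
    simp [cc, map_add]
  have hCg1 : (PowerSeries.C g1 : PowerSeries (PowerSeries ℂ))
      = 1 - cc β * PowerSeries.C PowerSeries.X := by
    rw [hg1, map_sub, map_one, PowerSeries.smul_eq_C_mul, map_mul]
    rfl
  have hwQ : wQ n = PowerSeries.C g1 * Yv ℂ - Xv ℂ
      + (((c : ℕ) : PowerSeries (PowerSeries ℂ)) + 1) * (Xv ℂ * Yv ℂ) := by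
    rw [hCg1, hXv, hYv, hcc, hccβ, wQ, smul_eq_cc, hXv, hYv]
    ring
  have hfact : wQ n - (((c : ℕ) : PowerSeries (PowerSeries ℂ)) + 1) * (Xv ℂ * Yv ℂ)
      = PowerSeries.C g1 * Yv ℂ - Xv ℂ := by
    rw [hwQ]; ring
  rw [hfact, hwQ] at hkf
  -- restructure both sides for the evaluation
  have hL : (PowerSeries.C g1 * Yv ℂ - Xv ℂ) * DT
      = PowerSeries.C g1 * (PowerSeries.X * DT)
        - PowerSeries.C PowerSeries.X * DT := by
    rw [hXv, hYv]; ring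
  have hR : (PowerSeries.C g1 * Yv ℂ - Xv ℂ
        + (((c : ℕ) : PowerSeries (PowerSeries ℂ)) + 1) * (Xv ℂ * Yv ℂ)) * DL
      = (PowerSeries.C g1 * (PowerSeries.X * DL)
          - PowerSeries.C PowerSeries.X * DL)
        + PowerSeries.C (PowerSeries.C ((c : ℂ) + 1))
            * (PowerSeries.C PowerSeries.X * (PowerSeries.X * DL)) := by
    rw [hXv, hYv, hcc]
    have : cc ((c : ℕ) : ℂ) + 1 = PowerSeries.C (PowerSeries.C ((c : ℂ) + 1)) := by
      simp [cc, map_add]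
    rw [this]
    ring
  rw [hL, hR] at hkf
  have hE := congrArg (Esub β) hkf
  simp only [Esub_add, Esub_sub, Esub_Cmul, Esub_ymul] at hE
  -- hE : g1 * (σ * E DT) - X * E DT = (g1 * (σ * E DL) - X * E DL) + C (c+1) * (X * (σ * E DL))
  have hg1s : g1 * sigv β = PowerSeries.X := g1_sigv β
  have hzero : PowerSeries.C ((c : ℂ) + 1) * (PowerSeries.X * (sigv β * Esub β DL)) = 0 := by
    linear_combination (Esub β DT) * hg1s - hE - (Esub β DL) * hg1s
  have hEDL : Esub β DL = 0 := by
    have h1 : (PowerSeries.C ((c : ℂ) + 1)) ≠ 0 := by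
      intro hcon
      have := congrArg (PowerSeries.coeff 0) hcon
      rw [PowerSeries.coeff_zero_C, map_zero] at this
      exact (Nat.cast_add_one_ne_zero c) this
    have h2 := (mul_eq_zero.mp hzero).resolve_left h1
    have h3 := (mul_eq_zero.mp h2).resolve_left (PowerSeries.X_ne_zero)
    exact (mul_eq_zero.mp h3).resolve_left (sigv_ne β)
  rw [hDL, Esub_sub] at hEDL
  have hLams : ∀ j : Fin (NN n), Esub β (Lams lam j)
      = lam j * shiftSeries a (lam (pr j)) := by
    intro j
    have h4 : Lams lam j = PowerSeries.C (lam j) * Lamy lam (pr j) := by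
      rw [Lams, Lamx, mul_comm]
    rw [h4, Esub_Cmul, hba, Esub_Lamy]
  rw [hLams, hLams] at hEDL
  have := sub_eq_zero.mp hEDL
  exact this.symm

end FinalSec

/-- The eigenvalue series `λ_i(u)` of a highest weight representation of
`X(osp_{1|2n})` satisfy the consistency conditions
`λ_i(u) λ_{i′}(u+n−i+1/2) = λ_{i+1}(u) λ_{(i+1)′}(u+n−i+1/2)` for `i = 1,…,n`. -/
theorem hw_consistency
    (n : ℕ) (hn : 1 ≤ n) (V : Type) [AddCommGroup V] [Module ℂ V]
    [Module (XX n) V] [IsScalarTower ℂ (XX n) V]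
    (ξ : V) (lam : Fin (NN n) → PowerSeries ℂ)
    (h : IsHighestWeight n ξ lam) :
    Consistent n lam := by
  obtain ⟨hne, -, hw3, hw4, -⟩ := h
  have hex : ∃ φ : Module.Dual ℂ V, φ ξ ≠ 0 := by
    by_contra hcon
    push_neg at hcon
    exact hne ((Module.forall_dual_apply_eq_zero_iff ℂ ξ).mp hcon)
  obtain ⟨φ, hφ⟩ := hex
  set θ : Module.Dual ℂ V := (φ ξ)⁻¹ • φ with hθdef
  have hθ : θ ξ = 1 := by
    rw [hθdef]
    simp only [LinearMap.smul_apply, smul_eq_mul]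
    exact inv_mul_cancel₀ hφ
  intro i hi
  exact lam_step θ ξ lam hθ hw3 hw4 (by omega)

end OspYangian
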